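/- In the Jordan plane J = k⟨x,y⟩ with relation [y,x] = -(1/2)x², every nonzero prime ideal of J contains the element x. -/

import Mathlib

/-- The defining relation of the Jordan plane: `y*x = x*y - (1/2)*x^2`,
i.e. `[y,x] = -(1/2) x²`. -/
inductive JordanRel (k : Type*) [Field k] :
    FreeAlgebra k (Fin 2) → FreeAlgebra k (Fin 2) → Prop
  | rel : JordanRel k
      (FreeAlgebra.ι k (1 : Fin 2) * FreeAlgebra.ι k (0 : Fin 2))
      (FreeAlgebra.ι k (0 : Fin 2) * FreeAlgebra.ι k (1 : Fin 2) -
        (2⁻¹ : k) • (FreeAlgebra.ι k (0 : Fin 2)) ^ 2)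

/-- The Jordan plane `J = k⟨x,y : [y,x] = -(1/2)x²⟩`. -/
abbrev JordanPlane (k : Type*) [Field k] := RingQuot (JordanRel k)

/-- The generator `x` of the Jordan plane. -/
noncomputable def JordanPlane.x (k : Type*) [Field k] : JordanPlane k :=
  RingQuot.mkAlgHom k (JordanRel k) (FreeAlgebra.ι k (0 : Fin 2))

noncomputable def JordanPlane.y (k : Type*) [Field k] : JordanPlane k :=
  RingQuot.mkAlgHom k (JordanRel k) (FreeAlgebra.ι k (1 : Fin 2))

namespace JordanScratch
open JordanPlane Polynomial

set_option linter.unusedSectionVars false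
set_option linter.unnecessarySimpa false
variable (k : Type*) [Field k] [CharZero k]

lemma jrel : y k * x k = x k * y k - (2⁻¹ : k) • (x k)^2 := by
  have h := RingQuot.mkAlgHom_rel k (JordanRel.rel (k := k))
  simpa [JordanPlane.x, JordanPlane.y, map_sub, map_mul, map_smul, map_pow] using h

/-- induction principle -/
lemma jordan_induction {motive : JordanPlane k → Prop}
    (halg : ∀ c : k, motive (algebraMap k _ c))
    (hx : motive (x k)) (hy : motive (y k))
    (hadd : ∀ p q, motive p → motive q → motive (p + q))
    (hmul : ∀ p q, motive p → motive q → motive (p * q)) :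
    ∀ p, motive p := by
  intro p
  obtain ⟨a, rfl⟩ := RingQuot.mkAlgHom_surjective k (JordanRel k) p
  induction a using FreeAlgebra.induction with
  | grade0 c => simpa using halg c
  | grade1 i =>
      fin_cases i
      · exact hx
      · exact hy
  | add a b ha hb => rw [map_add]; exact hadd _ _ ha hb
  | mul a b ha hb => rw [map_mul]; exact hmul _ _ ha hb

end JordanScratch

namespace JordanScratch
open JordanPlane Polynomial

variable {k : Type*} [Field k] [CharZero k]

noncomputable def z : JordanPlane k := y k - (2⁻¹ : k) • x k

lemma hyx : y k * x k = x k * z (k := k) := by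
  rw [jrel, z, mul_sub, mul_smul_comm, pow_two]

lemma hxy : x k * y k = (y k + (2⁻¹ : k) • x k) * x k := by
  rw [add_mul, smul_mul_assoc, jrel, ← pow_two, sub_add_cancel]

/-- x is left-normal: x * r = r' * x. -/
lemma x_normal : ∀ r : JordanPlane k, ∃ r', x k * r = r' * x k := by
  apply jordan_induction
  · intro c; exact ⟨algebraMap k _ c, (Algebra.commutes c (x k)).symm⟩
  · exact ⟨x k, rfl⟩
  · exact ⟨y k + (2⁻¹ : k) • x k, hxy⟩
  · rintro p q ⟨p', hp⟩ ⟨q', hq⟩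
    exact ⟨p' + q', by rw [mul_add, hp, hq, add_mul]⟩
  · rintro p q ⟨p', hp⟩ ⟨q', hq⟩
    refine ⟨p' * q', ?_⟩
    rw [← mul_assoc, hp, mul_assoc, hq, ← mul_assoc]

lemma ypow_mul_x : ∀ j : ℕ, (y k)^j * x k = x k * (z (k := k))^j := by
  intro j
  induction j with
  | zero => simp
  | succ m ih =>
      rw [pow_succ, mul_assoc, hyx, ← mul_assoc, ih, mul_assoc, ← pow_succ]

/-- span of x^i y^j with j ≤ n -/
noncomputable def S (k : Type*) [Field k] (n : ℕ) : Submodule k (JordanPlane k) :=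
  Submodule.span k {a | ∃ i : ℕ, ∃ j ≤ n, a = (x k)^i * (y k)^j}

lemma S_mono {n m : ℕ} (h : n ≤ m) : S k n ≤ S k m := by
  apply Submodule.span_mono
  rintro a ⟨i, j, hj, rfl⟩
  exact ⟨i, j, hj.trans h, rfl⟩

lemma mem_S (i j n : ℕ) (hj : j ≤ n) : (x k)^i * (y k)^j ∈ S k n :=
  Submodule.subset_span ⟨i, j, hj, rfl⟩

lemma xmul_S {n : ℕ} {p : JordanPlane k} (hp : p ∈ S k n) : x k * p ∈ S k n := by
  induction hp using Submodule.span_induction with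
  | mem a ha =>
      obtain ⟨i, j, hj, rfl⟩ := ha
      rw [← mul_assoc, ← pow_succ']
      exact mem_S _ _ _ hj
  | zero => simp
  | add a b _ _ ha hb => rw [mul_add]; exact (S k n).add_mem ha hb
  | smul c a _ ha => rw [mul_smul_comm]; exact (S k n).smul_mem c ha

lemma xpowmul_S {n i : ℕ} {p : JordanPlane k} (hp : p ∈ S k n) : (x k)^i * p ∈ S k n := by
  induction i with
  | zero => simpa using hp
  | succ m ih => rw [pow_succ', mul_assoc]; exact xmul_S ih

lemma Smul_y {n : ℕ} {p : JordanPlane k} (hp : p ∈ S k n) : p * y k ∈ S k (n + 1) := by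
  induction hp using Submodule.span_induction with
  | mem a ha =>
      obtain ⟨i, j, hj, rfl⟩ := ha
      rw [mul_assoc, ← pow_succ]
      exact mem_S _ _ _ (by omega)
  | zero => simp
  | add a b _ _ ha hb => rw [add_mul]; exact (S k (n+1)).add_mem ha hb
  | smul c a _ ha => rw [smul_mul_assoc]; exact (S k (n+1)).smul_mem c ha

lemma main_AB : ∀ n : ℕ, (∀ p ∈ S k n, p * x k ∈ S k n) ∧
    ((z (k := k))^n ∈ S k n ∧ (z (k := k))^n - (y k)^n ∈ S k (n - 1)) := by
  intro n
  induction n using Nat.strong_induction_on with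
  | _ n IH =>
    have hB : (z (k := k))^n ∈ S k n ∧ (z (k := k))^n - (y k)^n ∈ S k (n - 1) := by
      cases n with
      | zero =>
          constructor
          · simpa using mem_S (k := k) 0 0 0 le_rfl
          · simp
      | succ m =>
          have hzm : (z (k := k))^m ∈ S k m := ((IH m (Nat.lt_succ_self m)).2).1
          have hzym : (z (k := k))^m - (y k)^m ∈ S k (m - 1) := ((IH m (Nat.lt_succ_self m)).2).2
          have hA : ∀ p ∈ S k m, p * x k ∈ S k m := (IH m (Nat.lt_succ_self m)).1
          have h1 : (z (k := k))^(m+1) = (z (k := k))^m * y k - (2⁻¹:k) • ((z (k := k))^m * x k) := by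
            rw [pow_succ, z, mul_sub, mul_smul_comm]
          constructor
          · rw [h1]
            exact (S k (m+1)).sub_mem (Smul_y hzm)
              ((S k (m+1)).smul_mem _ (S_mono (Nat.le_succ m) (hA _ hzm)))
          · have h2 : (z (k := k))^(m+1) - (y k)^(m+1)
                = ((z (k := k))^m - (y k)^m) * y k - (2⁻¹:k) • ((z (k := k))^m * x k) := by
              rw [h1, sub_mul, pow_succ]; exact sub_right_comm _ _ _
            rw [h2]
            simp only [Nat.add_sub_cancel]
            refine (S k m).sub_mem ?_ ((S k m).smul_mem _ (hA _ hzm))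
            have := Smul_y (k := k) hzym
            cases m with
            | zero => simpa using this
            | succ l => simpa [Nat.succ_sub_one] using this
    refine ⟨?_, hB⟩
    intro p hp
    induction hp using Submodule.span_induction with
    | mem a ha =>
        obtain ⟨i, j, hj, rfl⟩ := ha
        rw [mul_assoc, ypow_mul_x, ← mul_assoc, ← pow_succ]
        have hzj : (z (k := k))^j - (y k)^j ∈ S k (j - 1) := by
          rcases lt_or_eq_of_le hj with h | h
          · exact ((IH j h).2).2
          · subst h; exact hB.2
        have : (x k)^(i+1) * (z (k := k))^j
            = (x k)^(i+1) * (y k)^j + (x k)^(i+1) * ((z (k := k))^j - (y k)^j) := by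
          rw [mul_sub]; abel
        rw [this]
        refine (S k n).add_mem (mem_S _ _ _ hj) ?_
        exact S_mono (by omega) (xpowmul_S hzj)
    | zero => simp
    | add a b _ _ ha hb => rw [add_mul]; exact (S k n).add_mem ha hb
    | smul c a _ ha => rw [smul_mul_assoc]; exact (S k n).smul_mem c ha

lemma Smul_x {n : ℕ} {p : JordanPlane k} (hp : p ∈ S k n) : p * x k ∈ S k n :=
  (main_AB n).1 p hp

lemma Smul_xpow {n i : ℕ} {p : JordanPlane k} (hp : p ∈ S k n) : p * (x k)^i ∈ S k n := by
  induction i with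
  | zero => simpa using hp
  | succ m ih => rw [pow_succ, ← mul_assoc]; exact Smul_x ih

lemma Smul_ypow {n j : ℕ} {p : JordanPlane k} (hp : p ∈ S k n) : p * (y k)^j ∈ S k (n + j) := by
  induction j with
  | zero => simpa using hp
  | succ m ih => rw [pow_succ, ← mul_assoc]; exact Smul_y ih

lemma exists_S : ∀ p : JordanPlane k, ∃ n, p ∈ S k n := by
  apply jordan_induction
  · intro c
    refine ⟨0, ?_⟩
    have : (algebraMap k (JordanPlane k)) c = c • ((x k)^0 * (y k)^0) := by
      simp [Algebra.algebraMap_eq_smul_one]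
    rw [this]
    exact (S k 0).smul_mem c (mem_S 0 0 0 le_rfl)
  · refine ⟨0, ?_⟩
    have : x k = (x k)^1 * (y k)^0 := by simp
    rw [this]; exact mem_S 1 0 0 le_rfl
  · refine ⟨1, ?_⟩
    have : y k = (x k)^0 * (y k)^1 := by simp
    rw [this]; exact mem_S 0 1 1 le_rfl
  · rintro p q ⟨n, hn⟩ ⟨m, hm⟩
    exact ⟨max n m, (S k _).add_mem (S_mono (le_max_left n m) hn)
      (S_mono (le_max_right n m) hm)⟩
  · rintro p q ⟨n, hn⟩ ⟨m, hm⟩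
    refine ⟨n + m, ?_⟩
    induction hm using Submodule.span_induction with
    | mem a ha =>
        obtain ⟨i, j, hj, rfl⟩ := ha
        rw [← mul_assoc]
        exact S_mono (by omega) (Smul_ypow (Smul_xpow hn))
    | zero => simp
    | add a b _ _ ha hb => rw [mul_add]; exact (S k _).add_mem ha hb
    | smul c a _ ha => rw [mul_smul_comm]; exact (S k _).smul_mem c ha

lemma S_zero {p : JordanPlane k} (hp : p ∈ S k 0) :
    ∃ g : Polynomial k, p = aeval (x k) g := by
  induction hp using Submodule.span_induction with
  | mem a ha =>
      obtain ⟨i, j, hj, rfl⟩ := ha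
      interval_cases j
      exact ⟨X^i, by simp⟩
  | zero => exact ⟨0, by simp⟩
  | add a b _ _ ha hb =>
      obtain ⟨g, rfl⟩ := ha; obtain ⟨h, rfl⟩ := hb
      exact ⟨g + h, by simp⟩
  | smul c a _ ha =>
      obtain ⟨g, rfl⟩ := ha
      exact ⟨c • g, by simp⟩

lemma commutator_S {n : ℕ} {p : JordanPlane k} (hp : p ∈ S k n) :
    p * x k - x k * p ∈ S k (n - 1) := by
  induction hp using Submodule.span_induction with
  | mem a ha =>
      obtain ⟨i, j, hj, rfl⟩ := ha
      rw [mul_assoc, ypow_mul_x, ← mul_assoc, ← pow_succ]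
      have : (x k)^(i+1) * (z (k := k))^j - x k * ((x k)^i * (y k)^j)
          = (x k)^(i+1) * ((z (k := k))^j - (y k)^j) := by
        rw [← mul_assoc, ← pow_succ', mul_sub]
      rw [this]
      exact S_mono (by omega) (xpowmul_S ((main_AB j).2.2))
  | zero => simp
  | add a b _ _ ha hb =>
      have : (a + b) * x k - x k * (a + b)
          = (a * x k - x k * a) + (b * x k - x k * b) := by
        rw [add_mul, mul_add]; abel
      rw [this]; exact (S k _).add_mem ha hb
  | smul c a _ ha =>
      have : (c • a) * x k - x k * (c • a) = c • (a * x k - x k * a) := by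
        rw [smul_mul_assoc, mul_smul_comm, smul_sub]
      rw [this]; exact (S k _).smul_mem c ha

end JordanScratch


section Model
open Polynomial

variable (k : Type*) [Field k] [CharZero k]

abbrev Vk := Polynomial (Polynomial k)

noncomputable def Xop : Module.End k (Vk k) := Algebra.lmul k (Vk k) Polynomial.X

noncomputable def Yop : Module.End k (Vk k) where
  toFun p := (-(2⁻¹ : k)) • (Polynomial.C Polynomial.X * Polynomial.X * p
      + Polynomial.X ^ 2 * Polynomial.derivative p)
  map_add' p q := by
    rw [derivative_add, ← smul_add]
    congr 1
    ring
  map_smul' c p := by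
    rw [derivative_smul, mul_smul_comm, mul_smul_comm, ← smul_add, smul_comm]
    rfl

@[simp] lemma lmul_app (a w : Vk k) : (Algebra.lmul k (Vk k) a) w = a * w := rfl

@[simp] lemma Xop_app (w : Vk k) : Xop k w = Polynomial.X * w := rfl

lemma Yop_app (w : Vk k) : Yop k w = (-(2⁻¹ : k)) • (Polynomial.C Polynomial.X * Polynomial.X * w
      + Polynomial.X ^ 2 * Polynomial.derivative w) := rfl

lemma YX_rel : Yop k * Xop k = Xop k * Yop k - (2⁻¹ : k) • (Xop k)^2 := by
  apply LinearMap.ext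
  intro p
  have h1 : (Yop k * Xop k) p = Yop k (Polynomial.X * p) := rfl
  have h2 : ((Xop k * Yop k - (2⁻¹ : k) • (Xop k)^2) p)
      = Polynomial.X * (Yop k p) - (2⁻¹ : k) • (Polynomial.X^2 * p) := by
    simp [LinearMap.sub_apply, LinearMap.smul_apply, Module.End.mul_apply, pow_two,
      mul_assoc]
  rw [h1, h2, Yop_app, Yop_app]
  rw [derivative_mul, derivative_X]
  rw [mul_smul_comm, sub_eq_add_neg, ← neg_smul, ← smul_add]
  exact congrArg (fun q : Vk k => (-(2⁻¹ : k)) • q) (by ring)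

end Model

section Model2
open Polynomial
set_option linter.unusedSectionVars false

variable {k : Type*} [Field k] [CharZero k]

lemma Yop_monomial (m : ℕ) (r : Polynomial k) :
    Yop k (monomial m r) = monomial (m+1) ((-(2⁻¹ : k)) •
      ((Polynomial.X + Polynomial.C ((m : k))) * r)) := by
  rw [Yop_app]
  rw [derivative_monomial]
  rw [mul_assoc, X_mul_monomial, C_mul_monomial]
  cases m with
  | zero =>
      simp only [Nat.cast_zero, mul_zero, monomial_zero_right, add_zero, mul_zero,
        smul_monomial, C_0]
  | succ l =>
      have : (Polynomial.X : Vk k)^2 * monomial (l + 1 - 1) (r * (l+1 : ℕ)) =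
          monomial (l + 2) (r * (l+1:ℕ)) := by
        rw [pow_two, mul_assoc, X_mul_monomial, X_mul_monomial]
        norm_num
      rw [this, ← map_add (monomial _), smul_monomial]
      congr 1
      simp only [C_add, C_1, C_eq_natCast]
      push_cast
      ring

noncomputable def Pm (m j : ℕ) : Polynomial k :=
  ∏ l ∈ Finset.range j, (Polynomial.X + Polynomial.C ((m : k) + l))

lemma Pm_monic (m j : ℕ) : (Pm (k := k) m j).Monic :=
  monic_prod_of_monic _ _ fun _ _ => monic_X_add_C _

lemma Pm_natDegree (m j : ℕ) : (Pm (k := k) m j).natDegree = j := by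
  rw [Pm, natDegree_prod _ _ (fun i _ => (monic_X_add_C _).ne_zero)]
  simp only [natDegree_X_add_C]
  simp

lemma Pm_coeff_self (m j : ℕ) : (Pm (k := k) m j).coeff j = 1 := by
  have := (Pm_monic (k := k) m j).coeff_natDegree
  rwa [Pm_natDegree] at this

lemma Pm_coeff_lt (m j i : ℕ) (h : j < i) : (Pm (k := k) m j).coeff i = 0 := by
  apply coeff_eq_zero_of_natDegree_lt
  rw [Pm_natDegree]; exact h

lemma Pm_coeff_sub_one (m j : ℕ) :
    (Pm (k := k) m (j+1)).coeff j = ∑ l ∈ Finset.range (j+1), ((m : k) + l) := by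
  induction j with
  | zero => simp [Pm]
  | succ t ih =>
      have hstep : (Pm (k := k) m (t+2)) = Pm m (t+1) * (Polynomial.X + Polynomial.C ((m:k) + (t+1))) := by
        rw [Pm, Finset.prod_range_succ]; push_cast; rfl
      rw [hstep, mul_add, coeff_add, coeff_mul_X, coeff_mul_C, ih, Pm_coeff_self,
        Finset.sum_range_succ (fun l => (m:k)+l) (t+1)]
      push_cast
      ring

lemma Yop_pow_monomial (j m : ℕ) :
    (Yop k ^ j) (monomial m (1 : Polynomial k)) =
      monomial (m + j) (((-(2⁻¹ : k))^j) • Pm (k := k) m j) := by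
  induction j with
  | zero => simp [Pm]
  | succ t ih =>
      rw [pow_succ', Module.End.mul_apply, ih, ← smul_monomial, LinearMap.map_smul,
        Yop_monomial, smul_monomial]
      congr 1
      have hP : Pm (k := k) m (t+1) = Pm m t * (Polynomial.X + Polynomial.C ((m:k)+(t:k))) := by
        rw [Pm, Pm, Finset.prod_range_succ]
      rw [smul_smul, hP]
      congr 1
      · rw [pow_succ]
      · push_cast
        ring

end Model2

section Phi
open Polynomial JordanPlane JordanScratch
set_option linter.unusedSectionVars false
set_option linter.unnecessarySimpa false

variable {k : Type*} [Field k] [CharZero k]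

noncomputable def Fgen (k : Type*) [Field k] [CharZero k] :
    FreeAlgebra k (Fin 2) →ₐ[k] Module.End k (Vk k) :=
  FreeAlgebra.lift k ![Xop k, Yop k]

lemma Fgen_rel : ∀ ⦃a b : FreeAlgebra k (Fin 2)⦄, JordanRel k a b → Fgen k a = Fgen k b := by
  rintro _ _ ⟨⟩
  simp only [Fgen, map_mul, map_sub, map_smul, map_pow, FreeAlgebra.lift_ι_apply,
    Matrix.cons_val_one, Matrix.head_cons, Matrix.cons_val_zero]
  exact YX_rel k

noncomputable def φ (k : Type*) [Field k] [CharZero k] :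
    JordanPlane k →ₐ[k] Module.End k (Vk k) :=
  RingQuot.liftAlgHom k ⟨Fgen k, Fgen_rel⟩

lemma φ_x : φ k (x k) = Xop k := by
  rw [JordanPlane.x, φ, RingQuot.liftAlgHom_mkAlgHom_apply]
  simp [Fgen, FreeAlgebra.lift_ι_apply]

lemma φ_y : φ k (y k) = Yop k := by
  rw [JordanPlane.y, φ, RingQuot.liftAlgHom_mkAlgHom_apply]
  simp [Fgen, FreeAlgebra.lift_ι_apply]

end Phi

section Psi
open Polynomial JordanPlane JordanScratch
set_option linter.unusedSectionVars false
set_option linter.unnecessarySimpa false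

variable {k : Type*} [Field k] [CharZero k]

noncomputable def Ψ (f : Polynomial (Polynomial k)) : JordanPlane k :=
  f.sum (fun j g => Polynomial.aeval (x k) g * (y k)^j)

lemma Ψ_monomial (j : ℕ) (g : Polynomial k) :
    Ψ (monomial j g) = Polynomial.aeval (x k) g * (y k)^j := by
  rw [Ψ, sum_monomial_index]
  simp

lemma Ψ_add (f f' : Polynomial (Polynomial k)) : Ψ (f + f') = Ψ f + Ψ f' := by
  rw [Ψ, sum_add_index] <;> simp [Ψ, add_mul]

lemma Ψ_smul (c : k) (f : Polynomial (Polynomial k)) : Ψ (c • f) = c • Ψ f := by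
  induction f using Polynomial.induction_on' with
  | add p q hp hq => rw [smul_add, Ψ_add, Ψ_add, hp, hq, smul_add]
  | monomial n a =>
      rw [smul_monomial, Ψ_monomial, Ψ_monomial, map_smul, smul_mul_assoc]

set_option maxHeartbeats 1000000 in
lemma Ψ_surj {n : ℕ} {p : JordanPlane k} (hp : p ∈ S k n) :
    ∃ f : Polynomial (Polynomial k), f.natDegree ≤ n ∧ Ψ f = p := by
  induction hp using Submodule.span_induction with
  | mem a ha =>
      obtain ⟨i, j, hj, rfl⟩ := ha
      refine ⟨monomial j (Polynomial.X ^ i), (natDegree_monomial_le _).trans hj, ?_⟩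
      rw [Ψ_monomial]
      simp
  | zero => exact ⟨0, by simp [Ψ]⟩
  | add a b _ _ ha hb =>
      obtain ⟨f, hf, rfl⟩ := ha; obtain ⟨f', hf', rfl⟩ := hb
      exact ⟨f + f', (natDegree_add_le _ _).trans (max_le hf hf'), Ψ_add f f'⟩
  | smul c a _ ha =>
      obtain ⟨f, hf, rfl⟩ := ha
      refine ⟨c • f, le_trans ?_ hf, Ψ_smul c f⟩
      apply natDegree_le_iff_coeff_eq_zero.mpr
      intro N hN
      rw [Polynomial.coeff_smul, coeff_eq_zero_of_natDegree_lt hN, smul_zero]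

lemma φΨ_monomial_apply (f : Polynomial (Polynomial k)) (m : ℕ) :
    (φ k (Ψ f)) (monomial m (1 : Polynomial k)) =
      ∑ j ∈ f.support, Polynomial.aeval (Polynomial.X : Vk k) (f.coeff j) *
        monomial (m + j) (((-(2⁻¹ : k))^j) • Pm (k := k) m j) := by
  rw [Ψ, Polynomial.sum_def, map_sum, LinearMap.sum_apply]
  apply Finset.sum_congr rfl
  intro j _
  rw [map_mul, map_pow, ← Polynomial.aeval_algHom_apply, φ_x, φ_y]
  rw [Module.End.mul_apply, Yop_pow_monomial]
  rw [Xop, Polynomial.aeval_algHom_apply (Algebra.lmul k (Vk k)) Polynomial.X (f.coeff j)]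
  rfl

lemma aevalX_coeff (g : Polynomial k) (i : ℕ) :
    (Polynomial.aeval (Polynomial.X : Vk k) g).coeff i = Polynomial.C (g.coeff i) := by
  have : (Polynomial.aeval (Polynomial.X : Vk k) g) = g.map (Polynomial.C) := by
    induction g using Polynomial.induction_on' with
    | add p q hp hq => rw [map_add, hp, hq, Polynomial.map_add]
    | monomial n a =>
        rw [aeval_monomial, map_monomial, ← C_mul_X_pow_eq_monomial]
        congr 1
  rw [this, coeff_map]

end Psi

section Core
open Polynomial JordanPlane JordanScratch
set_option linter.unusedSectionVars false
set_option linter.unnecessarySimpa false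

variable {k : Type*} [Field k] [CharZero k]

lemma coeff_term (g : Polynomial k) (a D i : ℕ) (r : Polynomial k) :
    ((Polynomial.aeval (Polynomial.X : Vk k) g * monomial a r).coeff D).coeff i
      = if a ≤ D then (g.coeff (D - a)) * r.coeff i else 0 := by
  rw [← C_mul_X_pow_eq_monomial]
  rw [show Polynomial.aeval (Polynomial.X : Vk k) g * (Polynomial.C r * Polynomial.X ^ a)
      = (Polynomial.aeval (Polynomial.X : Vk k) g * Polynomial.C r) * Polynomial.X ^ a by ring]
  rw [coeff_mul_X_pow']
  split
  · rw [coeff_mul_C, aevalX_coeff, coeff_C_mul]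
  · simp

lemma Eval_coeff (f : Polynomial (Polynomial k)) (m D i : ℕ) :
    (((φ k (Ψ f)) (monomial m (1 : Polynomial k))).coeff D).coeff i
    = ∑ j ∈ f.support, (if m + j ≤ D
        then (f.coeff j).coeff (D - (m+j)) * (((-(2⁻¹:k))^j) * (Pm (k := k) m j).coeff i)
        else 0) := by
  rw [φΨ_monomial_apply, finset_sum_coeff, finset_sum_coeff]
  apply Finset.sum_congr rfl
  intro j _
  rw [coeff_term]
  split
  · rw [coeff_smul, smul_eq_mul]
  · rfl

lemma commutator_ne_zero {f : Polynomial (Polynomial k)} (hn : 1 ≤ f.natDegree) :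
    Ψ f * x k - x k * Ψ f ≠ 0 := by
  intro hq
  have hf : f ≠ 0 := by
    intro h; rw [h] at hn; simp at hn
  set n := f.natDegree with hnn
  set g := f.coeff n with hgg
  have hg : g ≠ 0 := by
    rw [hgg, hnn, ← Polynomial.leadingCoeff]
    exact Polynomial.leadingCoeff_ne_zero.mpr hf
  set d := g.natDegree with hdd
  set D := n + 1 + d with hDD
  have hcomm : φ k (Ψ f) * Xop k = Xop k * φ k (Ψ f) := by
    have h2 := congrArg (φ k) hq
    rw [map_sub, map_mul, map_mul, map_zero, φ_x, sub_eq_zero] at h2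
    exact h2
  have hev : (φ k (Ψ f)) (monomial 1 (1 : Polynomial k))
      = Polynomial.X * ((φ k (Ψ f)) (monomial 0 (1 : Polynomial k))) := by
    have h3 := congrArg (fun (T : Module.End k (Vk k)) => T (monomial 0 (1:Polynomial k))) hcomm
    simp only [Module.End.mul_apply] at h3
    have h4 : Xop k (monomial 0 (1:Polynomial k)) = monomial 1 (1:Polynomial k) := by
      rw [Xop_app, X_mul_monomial]
    rw [h4] at h3
    rw [h3, Xop_app]
  -- extract coefficient (D, n-1)
  have hext := congrArg (fun v : Vk k => (v.coeff D).coeff (n-1)) hev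
  rw [Eval_coeff] at hext
  have hD1 : D = (D - 1) + 1 := by omega
  have hXside : ∀ A : Vk k, ((Polynomial.X * A).coeff D).coeff (n-1)
      = (A.coeff (D-1)).coeff (n-1) := by
    intro A
    conv_lhs => rw [hD1]
    rw [coeff_X_mul]
  rw [hXside, Eval_coeff] at hext
  -- rewrite both sums
  have hsum : ∑ j ∈ f.support, ((if 1 + j ≤ D
        then (f.coeff j).coeff (D - (1+j)) * (((-(2⁻¹:k))^j) * (Pm (k := k) 1 j).coeff (n-1))
        else 0)
      - (if 0 + j ≤ D - 1
        then (f.coeff j).coeff (D - 1 - (0+j)) * (((-(2⁻¹:k))^j) * (Pm (k := k) 0 j).coeff (n-1))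
        else 0)) = 0 := by
    rw [Finset.sum_sub_distrib, hext, sub_self]
  have hone : ∀ j ∈ f.support, j ≠ n → ((if 1 + j ≤ D
        then (f.coeff j).coeff (D - (1+j)) * (((-(2⁻¹:k))^j) * (Pm (k := k) 1 j).coeff (n-1))
        else 0)
      - (if 0 + j ≤ D - 1
        then (f.coeff j).coeff (D - 1 - (0+j)) * (((-(2⁻¹:k))^j) * (Pm (k := k) 0 j).coeff (n-1))
        else 0)) = 0 := by
    intro j hj hjn
    have hjle : j ≤ n := le_natDegree_of_mem_supp j hj
    have hjlt : j < n := lt_of_le_of_ne hjle hjn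
    have h1 : 1 + j ≤ D := by omega
    have h2 : 0 + j ≤ D - 1 := by omega
    rw [if_pos h1, if_pos h2]
    have heq : D - (1+j) = D - 1 - (0+j) := by omega
    rw [heq]
    rcases Nat.lt_or_ge j (n-1) with hc | hc
    · rw [Pm_coeff_lt 1 j _ hc, Pm_coeff_lt 0 j _ hc]
      ring
    · have hje : j = n - 1 := by omega
      subst hje
      rw [Pm_coeff_self, Pm_coeff_self]
      ring
  have hn_mem : n ∈ f.support := by
    rw [mem_support_iff]; exact hg
  have hmain := Finset.sum_eq_single_of_mem n hn_mem hone
  rw [hmain] at hsum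
  -- now compute the term at n
  have h1 : 1 + n ≤ D := by omega
  have h2 : 0 + n ≤ D - 1 := by omega
  rw [if_pos h1, if_pos h2] at hsum
  have heq : D - (1+n) = d := by omega
  have heq2 : D - 1 - (0+n) = d := by omega
  rw [heq, heq2] at hsum
  have e1 : (n-1)+1 = n := by omega
  have hPm1 : (Pm (k := k) 1 n).coeff (n-1) = ∑ l ∈ Finset.range n, (((1:ℕ):k) + l) := by
    have h5 := Pm_coeff_sub_one (k := k) 1 (n-1); rwa [e1] at h5
  have hPm0 : (Pm (k := k) 0 n).coeff (n-1) = ∑ l ∈ Finset.range n, (((0:ℕ):k) + l) := by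
    have h5 := Pm_coeff_sub_one (k := k) 0 (n-1); rwa [e1] at h5
  rw [hPm1, hPm0] at hsum
  have hfac : (∑ l ∈ Finset.range n, (((1:ℕ):k) + l)) - (∑ l ∈ Finset.range n, (((0:ℕ):k) + l))
      = (n : k) := by
    rw [← Finset.sum_sub_distrib]
    have : ∀ l ∈ Finset.range n, (((1:ℕ):k) + l) - (((0:ℕ):k) + l) = 1 := by
      intro l _; push_cast; ring
    rw [Finset.sum_congr rfl this, Finset.sum_const, Finset.card_range]
    simp
  have hz : g.coeff d * (((-(2⁻¹:k))^n) * (n : k)) = 0 := by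
    rw [← hfac]
    linear_combination hsum
  have hgd : g.coeff d ≠ 0 := by
    rw [hdd, ← Polynomial.leadingCoeff]
    exact Polynomial.leadingCoeff_ne_zero.mpr hg
  have hnk : (n : k) ≠ 0 := Nat.cast_ne_zero.mpr (by omega)
  have hc : ((-(2⁻¹:k))^n) ≠ 0 := by
    apply pow_ne_zero; simp
  exact (mul_ne_zero hgd (mul_ne_zero hc hnk)) hz

end Core

section Final
open Polynomial JordanPlane JordanScratch
set_option linter.unusedSectionVars false
set_option linter.unnecessarySimpa false

variable {k : Type*} [Field k] [CharZero k]

lemma P_smul_mem (P : TwoSidedIdeal (JordanPlane k)) (c : k) {p : JordanPlane k}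
    (hp : p ∈ P) : c • p ∈ P := by
  rw [Algebra.smul_def]
  exact P.mul_mem_left _ _ hp

lemma descent (P : TwoSidedIdeal (JordanPlane k)) :
    ∀ n : ℕ, ∀ p : JordanPlane k, p ∈ P → p ≠ 0 → p ∈ S k n →
      ∃ g : Polynomial k, g ≠ 0 ∧ Polynomial.aeval (x k) g ∈ P := by
  intro n
  induction n using Nat.strong_induction_on with
  | _ n IH =>
    intro p hpP hp0 hpS
    obtain ⟨f, hfdeg, rfl⟩ := Ψ_surj hpS
    by_cases hN : f.natDegree = 0
    · obtain ⟨a, ha⟩ := natDegree_eq_zero.mp hN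
      have hΨ : Ψ f = Polynomial.aeval (x k) a := by
        rw [← ha, ← monomial_zero_left, Ψ_monomial]
        simp
      refine ⟨a, ?_, by rwa [hΨ] at hpP⟩
      intro h
      apply hp0
      rw [hΨ, h]
      simp
    · have hn1 : 1 ≤ f.natDegree := Nat.one_le_iff_ne_zero.mpr hN
      have hq0 : Ψ f * x k - x k * Ψ f ≠ 0 := commutator_ne_zero hn1
      have hqP : Ψ f * x k - x k * Ψ f ∈ P :=
        P.sub_mem (P.mul_mem_right _ _ hpP) (P.mul_mem_left _ _ hpP)
      have hnn : 1 ≤ n := le_trans hn1 hfdeg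
      have hqS : Ψ f * x k - x k * Ψ f ∈ S k (n - 1) := commutator_S hpS
      exact IH (n-1) (by omega) _ hqP hq0 hqS

lemma ycx : ∀ i : ℕ, y k * (x k)^i - (x k)^i * y k
    = (-(2⁻¹:k)) • ((i:k) • (x k)^(i+1)) := by
  intro i
  induction i with
  | zero => simp
  | succ m ih =>
      have h1 : y k * (x k)^(m+1) = (y k * (x k)^m) * x k := by
        rw [mul_assoc, ← pow_succ]
      have h2 : y k * (x k)^m = (x k)^m * y k + (-(2⁻¹:k)) • ((m:k) • (x k)^(m+1)) := by
        rw [← ih]; abel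
      rw [h1, h2, add_mul, smul_mul_assoc, smul_mul_assoc, ← pow_succ]
      have h3 : (x k)^m * y k * x k = (x k)^(m+1) * y k
          + (-(2⁻¹:k)) • (x k)^(m+2) := by
        rw [mul_assoc, jrel, mul_sub, mul_smul_comm, ← mul_assoc, ← pow_succ, ← pow_add]
        module
      rw [h3]
      push_cast
      module

lemma ycomm (h : Polynomial k) : y k * Polynomial.aeval (x k) h - Polynomial.aeval (x k) h * y k
    = (-(2⁻¹:k)) • Polynomial.aeval (x k) (Polynomial.X^2 * Polynomial.derivative h) := by
  induction h using Polynomial.induction_on' with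
  | add p q hp hq =>
      rw [derivative_add, mul_add, map_add, map_add, mul_add, add_mul, smul_add, ← hp, ← hq]
      abel
  | monomial i a =>
      rw [aeval_monomial, derivative_monomial]
      cases i with
      | zero =>
          simp only [pow_zero, mul_one, Nat.cast_zero, mul_zero, map_zero, monomial_zero_right,
            mul_zero, smul_zero]
          rw [← Algebra.commutes a (y k), sub_self]
      | succ m =>
          have hX2 : (Polynomial.X : Polynomial k)^2 * monomial (m + 1 - 1) (a * ((m+1:ℕ):k))
              = monomial (m+2) (a * ((m+1:ℕ):k)) := by
            rw [pow_two, mul_assoc, Nat.add_sub_cancel, X_mul_monomial, X_mul_monomial]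
          rw [hX2, aeval_monomial]
          have hsm : (algebraMap k (JordanPlane k)) a * (x k)^(m+1) = a • (x k)^(m+1) := by
            rw [Algebra.smul_def]
          have hsm2 : (algebraMap k (JordanPlane k)) (a * ((m+1:ℕ):k)) * (x k)^(m+2)
              = (a * ((m+1:ℕ):k)) • (x k)^(m+2) := by
            rw [Algebra.smul_def]
          rw [hsm, hsm2]
          rw [mul_smul_comm, smul_mul_assoc,
            ← smul_sub a (y k * (x k)^(m+1)) ((x k)^(m+1) * y k), ycx]
          push_cast
          module

lemma card_support_zero {g : Polynomial k} (h : g.support.card = 0) : g = 0 := by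
  rwa [Finset.card_eq_zero, Polynomial.support_eq_empty] at h

lemma exists_pow_mem (P : TwoSidedIdeal (JordanPlane k)) :
    ∀ N : ℕ, ∀ g : Polynomial k, g.support.card ≤ N → g ≠ 0 →
      Polynomial.aeval (x k) g ∈ P → ∃ i : ℕ, (x k)^i ∈ P := by
  intro N
  induction N with
  | zero =>
      intro g hcard hg _
      exact absurd (card_support_zero (Nat.le_zero.mp hcard)) hg
  | succ N IH =>
      intro g hcard hg hgP
      by_cases h1 : g.support.card ≤ 1
      · -- g is a monomial
        have hcard1 : g.support.card = 1 := by
          rcases Nat.lt_or_ge g.support.card 1 with h | h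
          · exact absurd (card_support_zero (by omega)) hg
          · omega
        obtain ⟨i, a, ha, rfl⟩ := Polynomial.card_support_eq_one.mp hcard1
        refine ⟨i, ?_⟩
        have : Polynomial.aeval (x k) (Polynomial.C a * Polynomial.X ^ i) = a • (x k)^i := by
          rw [map_mul, aeval_C, map_pow, aeval_X, Algebra.smul_def]
        rw [this] at hgP
        have := P_smul_mem P a⁻¹ hgP
        rwa [smul_smul, inv_mul_cancel₀ ha, one_smul] at this
      · -- at least two terms
        push_neg at h1
        have hne : g.support.Nonempty := by
          rw [Polynomial.nonempty_support_iff]; exact hg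
        set i₀ := g.support.min' hne with hi₀
        have hi₀mem : i₀ ∈ g.support := g.support.min'_mem hne
        set h := Polynomial.X^2 * Polynomial.derivative g - (i₀ : k) • (Polynomial.X * g)
          with hh
        -- h ∈ "G"
        have hhP : Polynomial.aeval (x k) h ∈ P := by
          have hd : Polynomial.aeval (x k) (Polynomial.X^2 * Polynomial.derivative g) ∈ P := by
            have hyc := ycomm (k := k) g
            have hmem : y k * Polynomial.aeval (x k) g - Polynomial.aeval (x k) g * y k ∈ P :=
              P.sub_mem (P.mul_mem_left _ _ hgP) (P.mul_mem_right _ _ hgP)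
            rw [hyc] at hmem
            have := P_smul_mem P (-(2⁻¹:k))⁻¹ hmem
            rwa [smul_smul, inv_mul_cancel₀ (by norm_num), one_smul] at this
          have hx : Polynomial.aeval (x k) (Polynomial.X * g) ∈ P := by
            rw [map_mul, aeval_X]
            exact P.mul_mem_left _ _ hgP
          rw [hh, map_sub, map_smul]
          exact P.sub_mem hd (P_smul_mem P _ hx)
        -- coefficients of h
        have hc0 : h.coeff 0 = 0 := by
          rw [hh, coeff_sub, coeff_smul]
          rw [pow_two, mul_assoc, mul_coeff_zero, coeff_X_zero, zero_mul,
            mul_coeff_zero, coeff_X_zero, zero_mul]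
          simp
        have hcs : ∀ j : ℕ, h.coeff (j+1) = g.coeff j * ((j:k) - (i₀:k)) := by
          intro j
          rw [hh, coeff_sub, coeff_smul, coeff_X_mul]
          cases j with
          | zero =>
              rw [pow_two, mul_assoc, coeff_X_mul, mul_coeff_zero, coeff_X_zero, zero_mul]
              push_cast
              ring_nf
          | succ t =>
              rw [pow_two, mul_assoc, coeff_X_mul, coeff_X_mul, coeff_derivative]
              rw [smul_eq_mul]
              push_cast
              ring
        have hsupp : h.support ⊆ (g.support.erase i₀).image (· + 1) := by
          intro m hm
          rw [mem_support_iff] at hm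
          cases m with
          | zero => exact absurd hc0 hm
          | succ j =>
              rw [hcs j] at hm
              have hgj : g.coeff j ≠ 0 := fun hz => hm (by rw [hz, zero_mul])
              have hji : j ≠ i₀ := by
                intro hz
                apply hm
                rw [hz, sub_self, mul_zero]
              exact Finset.mem_image.mpr ⟨j, Finset.mem_erase.mpr ⟨hji, mem_support_iff.mpr hgj⟩, rfl⟩
        have hcard' : h.support.card ≤ N := by
          calc h.support.card ≤ ((g.support.erase i₀).image (· + 1)).card :=
                Finset.card_le_card hsupp
            _ ≤ (g.support.erase i₀).card := Finset.card_image_le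
            _ = g.support.card - 1 := Finset.card_erase_of_mem hi₀mem
            _ ≤ N := by omega
        have hh0 : h ≠ 0 := by
          obtain ⟨i₁, hi₁mem, hi₁ne⟩ := Finset.exists_mem_ne h1 i₀
          intro hz
          have := hcs i₁
          rw [hz, coeff_zero] at this
          have hg1 : g.coeff i₁ ≠ 0 := mem_support_iff.mp hi₁mem
          have : ((i₁:k) - (i₀:k)) = 0 := by
            rcases mul_eq_zero.mp this.symm with h' | h'
            · exact absurd h' hg1
            · exact h'
          have heq : (i₁ : k) = (i₀ : k) := sub_eq_zero.mp this
          exact hi₁ne (Nat.cast_injective heq)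
        exact IH h hcard' hh0 hhP

end Final

section Assemble
open Polynomial JordanPlane JordanScratch
set_option linter.unusedSectionVars false

variable {k : Type*} [Field k] [CharZero k]

lemma x_of_pow (P : TwoSidedIdeal (JordanPlane k)) (hproper : P ≠ ⊤)
    (hprime : ∀ a b : JordanPlane k,
      (∀ r : JordanPlane k, a * r * b ∈ P) → a ∈ P ∨ b ∈ P) :
    ∀ i : ℕ, (x k)^i ∈ P → x k ∈ P := by
  intro i
  induction i with
  | zero =>
      intro h
      simp only [pow_zero] at h
      exact absurd (P.eq_top h) hproper
  | succ m IH =>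
      intro h
      have hstep : ∀ r : JordanPlane k, x k * r * (x k)^m ∈ P := by
        intro r
        obtain ⟨r', hr⟩ := x_normal r
        rw [hr, mul_assoc, ← pow_succ']
        exact P.mul_mem_left _ _ h
      rcases hprime (x k) ((x k)^m) hstep with hx | hxm
      · exact hx
      · exact IH hxm

end Assemble


/-- Every nonzero (two-sided) prime ideal of the Jordan plane contains `x`. -/
theorem jordanPlane_prime_contains_x (k : Type*) [Field k] [CharZero k]
    [IsAlgClosed k] (P : TwoSidedIdeal (JordanPlane k))
    (hproper : P ≠ ⊤)
    (hprime : ∀ a b : JordanPlane k,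
      (∀ r : JordanPlane k, a * r * b ∈ P) → a ∈ P ∨ b ∈ P)
    (hne : P ≠ ⊥) :
    JordanPlane.x k ∈ P := by
  classical
  obtain ⟨p, hpP, hp0⟩ : ∃ p : JordanPlane k, p ∈ P ∧ p ≠ 0 := by
    by_contra h
    push_neg at h
    apply hne
    apply TwoSidedIdeal.ext
    intro q
    rw [TwoSidedIdeal.mem_bot]
    constructor
    · intro hq; exact h q hq
    · rintro rfl; exact P.zero_mem
  obtain ⟨n, hn⟩ := JordanScratch.exists_S p
  obtain ⟨g, hg0, hgP⟩ := descent P n p hpP hp0 hn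
  have hcard : g.support.card ≤ g.support.card := le_rfl
  obtain ⟨i, hi⟩ := exists_pow_mem P g.support.card g hcard hg0 hgP
  exact x_of_pow P hproper hprime i hi
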